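/- arXiv:1702.08241 — 4 statements merged into one kernel-verified Lean document; each statement's English description precedes it below -/
import Mathlib

section
/- Let H, M be Hilbert spaces, A a bounded coercive symmetric bilinear form on H, b a bounded bilinear form on H×M satisfying the inf-sup condition sup_{w∈H, w≠0} |b(w,p)|/‖w‖_H ≥ β‖p‖_M for all p ∈ M with β > 0. Then for every bounded linear functional f on H there exists a unique pair (u,σ) ∈ H×M with A(u,v) + b(v,σ) = f(v) for all v ∈ H and b(u,p) = 0 for all p ∈ M. -/
open InnerProductSpace RealInnerProductSpace

private theorem saddle_aux_unique
    {H M : Type*} [NormedAddCommGroup H] [InnerProductSpace ℝ H]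
    [NormedAddCommGroup M] [InnerProductSpace ℝ M]
    (A : H →ₗ[ℝ] H →ₗ[ℝ] ℝ) (b : H →ₗ[ℝ] M →ₗ[ℝ] ℝ)
    (α : ℝ) (hα : 0 < α) (hA_coer : ∀ v, α * ‖v‖ ^ 2 ≤ A v v)
    (Bt : M →L[ℝ] H) (hBt : ∀ p v, ⟪Bt p, v⟫_ℝ = b v p)
    (β : ℝ) (hβ : 0 < β) (hBt_low : ∀ p, β * ‖p‖ ≤ ‖Bt p‖)
    (f : H →L[ℝ] ℝ) :
    ∀ x y : H × M,
      ((∀ v, A x.1 v + b v x.2 = f v) ∧ (∀ p, b x.1 p = 0)) →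
      ((∀ v, A y.1 v + b v y.2 = f v) ∧ (∀ p, b y.1 p = 0)) → x = y := by
  rintro ⟨u1, s1⟩ ⟨u2, s2⟩ ⟨h1, h1'⟩ ⟨h2, h2'⟩
  have hd0 : ∀ v, A (u1 - u2) v + b v (s1 - s2) = 0 := by
    intro v
    have e1 := h1 v; have e2 := h2 v
    simp only [map_sub, LinearMap.sub_apply]
    linarith
  have hbd : ∀ p, b (u1 - u2) p = 0 := by
    intro p
    have e1 := h1' p; have e2 := h2' p
    simp only [map_sub, LinearMap.sub_apply]
    linarith
  have hA0 : A (u1 - u2) (u1 - u2) = 0 := by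
    have e1 := hd0 (u1 - u2)
    have e2 := hbd (s1 - s2)
    linarith
  have hueq : u1 = u2 := by
    have e1 := hA_coer (u1 - u2)
    have e2 : ‖u1 - u2‖ ^ 2 ≤ 0 := by nlinarith
    have e3 : ‖u1 - u2‖ ^ 2 = 0 := le_antisymm e2 (sq_nonneg _)
    have e4 : ‖u1 - u2‖ = 0 := (pow_eq_zero_iff two_ne_zero).mp e3
    exact sub_eq_zero.mp (norm_eq_zero.mp e4)
  have hbe : ∀ v, b v (s1 - s2) = 0 := by
    intro v
    have e1 := hd0 v
    rw [hueq, sub_self] at e1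
    simpa using e1
  have hseq : s1 = s2 := by
    have hBte : Bt (s1 - s2) = 0 := by
      have e1 : ⟪Bt (s1 - s2), Bt (s1 - s2)⟫_ℝ = 0 := by
        rw [hBt]; exact hbe (Bt (s1 - s2))
      exact inner_self_eq_zero.mp e1
    have e2 := hBt_low (s1 - s2)
    rw [hBte, norm_zero] at e2
    have : ‖s1 - s2‖ = 0 := le_antisymm (nonpos_of_mul_nonpos_right e2 hβ) (norm_nonneg _)
    exact sub_eq_zero.mp (norm_eq_zero.mp this)
  exact Prod.ext hueq hseq

set_option maxHeartbeats 1000000 in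
/-- Existence and uniqueness for the saddle-point (mixed) problem: with `A` bounded,
symmetric, coercive on `H`, `b` bounded bilinear on `H × M` satisfying the inf-sup
condition, for every bounded linear functional `f` there is a unique `(u,σ)` with
`A(u,v) + b(v,σ) = f(v)` for all `v` and `b(u,p) = 0` for all `p`. -/
theorem saddle_point_existence_uniqueness
    {H M : Type*} [NormedAddCommGroup H] [InnerProductSpace ℝ H] [CompleteSpace H]
    [NormedAddCommGroup M] [InnerProductSpace ℝ M] [CompleteSpace M]
    (A : H →ₗ[ℝ] H →ₗ[ℝ] ℝ) (b : H →ₗ[ℝ] M →ₗ[ℝ] ℝ)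
    (CA : ℝ) (hA_bdd : ∀ u v, |A u v| ≤ CA * ‖u‖ * ‖v‖)
    (hA_symm : ∀ u v, A u v = A v u)
    (α : ℝ) (hα : 0 < α) (hA_coer : ∀ v, α * ‖v‖ ^ 2 ≤ A v v)
    (Cb : ℝ) (hb_bdd : ∀ w p, |b w p| ≤ Cb * ‖w‖ * ‖p‖)
    (β : ℝ) (hβ : 0 < β)
    (hinfsup : ∀ p : M, β * ‖p‖ ≤ ⨆ w : {w : H // w ≠ 0}, |b w.1 p| / ‖w.1‖)
    (f : H →L[ℝ] ℝ) :
    ∃! uσ : H × M,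
      (∀ v : H, A uσ.1 v + b v uσ.2 = f v) ∧ (∀ p : M, b uσ.1 p = 0) := by
  classical
  -- continuous versions of the bilinear forms
  set A' : H →L[ℝ] H →L[ℝ] ℝ :=
    LinearMap.mkContinuous₂ A CA (fun u v => by
      simpa [Real.norm_eq_abs] using hA_bdd u v) with hA'def
  have hA'app : ∀ u v, A' u v = A u v := fun u v => rfl
  set b' : H →L[ℝ] M →L[ℝ] ℝ :=
    LinearMap.mkContinuous₂ b Cb (fun w p => by
      simpa [Real.norm_eq_abs] using hb_bdd w p) with hb'def
  have hb'app : ∀ w p, b' w p = b w p := fun w p => rfl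
  -- the operator `Bt : M → H` representing `b` via Riesz
  set Bt : M →L[ℝ] H :=
    ((InnerProductSpace.toDual ℝ H).symm.toContinuousLinearEquiv.toContinuousLinearMap).comp
      b'.flip with hBtdef
  have hBt : ∀ p v, ⟪Bt p, v⟫_ℝ = b v p := by
    intro p v
    simp only [hBtdef, ContinuousLinearMap.coe_comp', Function.comp_apply,
      ContinuousLinearEquiv.coe_coe, LinearIsometryEquiv.coe_toContinuousLinearEquiv,
      InnerProductSpace.toDual_symm_apply, ContinuousLinearMap.flip_apply]
    exact hb'app v p
  -- `Bt` is bounded below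
  have hBt_low : ∀ p, β * ‖p‖ ≤ ‖Bt p‖ := by
    intro p
    refine (hinfsup p).trans (Real.iSup_le (fun w => ?_) (norm_nonneg _))
    rcases w with ⟨w, hw⟩
    rw [div_le_iff₀ (norm_pos_iff.mpr hw)]
    calc |b w p| = |⟪Bt p, w⟫_ℝ| := by rw [hBt]
      _ ≤ ‖Bt p‖ * ‖w‖ := abs_real_inner_le_norm _ _
  set K : Submodule ℝ H := LinearMap.range (Bt : M →ₗ[ℝ] H) with hK
  set Z : Submodule ℝ H := Kᗮ with hZ
  have hZmem : ∀ v : H, v ∈ Z ↔ ∀ p, b v p = 0 := by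
    intro v
    constructor
    · intro hv p
      have h0 := (Submodule.mem_orthogonal K v).mp hv (Bt p) ⟨p, rfl⟩
      rw [hBt] at h0; exact h0
    · intro hv
      rw [hZ, Submodule.mem_orthogonal]
      rintro u ⟨p, rfl⟩
      rw [ContinuousLinearMap.coe_coe, hBt]; exact hv p
  -- `K` is closed
  have hBt_anti : AntilipschitzWith (β⁻¹.toNNReal) Bt := by
    apply ContinuousLinearMap.antilipschitz_of_bound
    intro p
    rw [Real.coe_toNNReal _ (inv_pos.mpr hβ).le]
    calc ‖p‖ = β⁻¹ * (β * ‖p‖) := by field_simp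
      _ ≤ β⁻¹ * ‖Bt p‖ := mul_le_mul_of_nonneg_left (hBt_low p) (inv_pos.mpr hβ).le
  have hKclosed : IsClosed (K : Set H) := by
    have h1 := hBt_anti.isClosed_range Bt.uniformContinuous
    simpa [hK, LinearMap.coe_range, ContinuousLinearMap.coe_coe] using h1
  haveI : CompleteSpace Z := K.isClosed_orthogonal.completeSpace_coe
  -- Lax–Milgram on Z
  set AZ : Z →L[ℝ] Z →L[ℝ] ℝ := (((A'.comp Z.subtypeL).flip).comp Z.subtypeL).flip with hAZ
  have hAZapp : ∀ z w : Z, AZ z w = A z.1 w.1 := fun z w => rfl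
  have hcoer : IsCoercive AZ := by
    refine ⟨α, hα, fun z => ?_⟩
    have h1 := hA_coer (z : H)
    calc α * ‖z‖ * ‖z‖ = α * ‖(z : H)‖ ^ 2 := by
          rw [pow_two]; push_cast [Submodule.coe_norm]; ring
      _ ≤ A (z : H) (z : H) := h1
      _ = AZ z z := (hAZapp z z).symm
  set T := hcoer.continuousLinearEquivOfBilin with hT
  set u₀ : Z := T.symm ((InnerProductSpace.toDual ℝ Z).symm (f.comp Z.subtypeL)) with hu₀
  have husolve : ∀ w : Z, A (u₀ : H) (w : H) = f w := by
    intro w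
    have h1 : ⟪T u₀, w⟫_ℝ = AZ u₀ w := hcoer.continuousLinearEquivOfBilin_apply u₀ w
    rw [hu₀, T.apply_symm_apply, InnerProductSpace.toDual_symm_apply] at h1
    rw [← hAZapp u₀ w, ← h1]
    rfl
  -- construct σ
  set g : H →L[ℝ] ℝ := f - A' (u₀ : H) with hg
  set hrep : H := (InnerProductSpace.toDual ℝ H).symm g with hh
  have hhinner : ∀ v, ⟪hrep, v⟫_ℝ = f v - A (u₀ : H) v := by
    intro v
    rw [hh, InnerProductSpace.toDual_symm_apply]
    simp [hg, hA'app]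
  have hhZperp : hrep ∈ Zᗮ := by
    rw [Submodule.mem_orthogonal]
    intro z hz
    rw [real_inner_comm, hhinner]
    have := husolve ⟨z, hz⟩
    simp only [Submodule.coe_mk] at this ⊢
    rw [this]; ring
  have hZperp : Zᗮ = K := by
    rw [hZ, Submodule.orthogonal_orthogonal_eq_closure]
    exact SetLike.ext' (by rw [Submodule.topologicalClosure_coe, hKclosed.closure_eq])
  obtain ⟨σ, hσ⟩ : ∃ σ, Bt σ = hrep := (hZperp ▸ hhZperp : hrep ∈ K)
  have key := saddle_aux_unique A b α hα hA_coer Bt hBt β hβ hBt_low f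
  refine ⟨((u₀ : H), σ), ⟨?_, ?_⟩, fun y hy => key y ((u₀ : H), σ) hy ⟨?_, ?_⟩⟩
  case _ => -- existence, first condition
    intro v
    have : b v σ = f v - A (u₀ : H) v := by rw [← hhinner v, ← hσ, hBt]
    linarith
  case _ =>
    intro p
    exact (hZmem (u₀ : H)).mp u₀.2 p
  case _ =>
    intro v
    have : b v σ = f v - A (u₀ : H) v := by rw [← hhinner v, ← hσ, hBt]
    linarith
  case _ =>
    intro p
    exact (hZmem (u₀ : H)).mp u₀.2 p
end

section
/- Let T be a compact self-adjoint positive operator on a Hilbert space and T_h a sequence of self-adjoint operators converging to T pointwise such that the set ⋃_h (T − T_h)B (B the unit ball) is relatively compact. Then ‖T − T_h‖ → 0 in operator norm. -/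
open Filter

/-- If `T` is a compact self-adjoint positive operator, `T_n` are self-adjoint
operators converging pointwise to `T`, and the collective image
`⋃ n, (T − T_n)(B)` of the unit ball is relatively compact, then `‖T − T_n‖ → 0`. -/
theorem collectively_compact_norm_convergence
    {H : Type*} [NormedAddCommGroup H] [InnerProductSpace ℝ H] [CompleteSpace H]
    (T : H →L[ℝ] H) (Th : ℕ → H →L[ℝ] H)
    (hT_sa : ∀ x y : H, (inner ℝ (T x) y : ℝ) = inner ℝ x (T y))
    (hT_pos : ∀ x : H, (0:ℝ) ≤ inner ℝ (T x) x)
    (hT_compact : IsCompactOperator T)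
    (hTh_sa : ∀ n, ∀ x y : H, (inner ℝ (Th n x) y : ℝ) = inner ℝ x (Th n y))
    (h_ptwise : ∀ f : H, Tendsto (fun n => Th n f) atTop (nhds (T f)))
    (h_collcomp : IsCompact (closure
      (⋃ n : ℕ, (fun x => T x - Th n x) '' Metric.closedBall (0:H) 1))) :
    Tendsto (fun n => ‖T - Th n‖) atTop (nhds 0) := by
  set S : ℕ → H →L[ℝ] H := fun n => T - Th n with hS
  have hS_sa : ∀ n, ∀ x y : H, (inner ℝ (S n x) y : ℝ) = inner ℝ x (S n y) := by
    intro n x y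
    simp only [hS, ContinuousLinearMap.sub_apply, inner_sub_left, inner_sub_right,
      hT_sa x y, hTh_sa n x y]
  have hS_pt : ∀ z : H, Tendsto (fun n => ‖S n z‖) atTop (nhds 0) := by
    intro z
    have h1 : Tendsto (fun n => S n z) atTop (nhds 0) := by
      have := (tendsto_const_nhds (x := T z) (f := atTop (α := ℕ))).sub (h_ptwise z)
      simpa [hS] using this
    simpa using h1.norm
  by_contra hcon
  rw [Metric.tendsto_atTop] at hcon
  push_neg at hcon
  obtain ⟨ε, hε, hfreq⟩ := hcon
  obtain ⟨φ, hφmono, hφ⟩ := Filter.extraction_of_frequently_atTop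
    (Filter.frequently_atTop.2 hfreq)
  have hφ' : ∀ k, ε / 2 < ‖S (φ k)‖ := by
    intro k
    have := hφ k
    rw [Real.dist_eq, sub_zero, abs_of_nonneg (norm_nonneg _)] at this
    linarith
  choose x hx1 hx2 using fun k =>
    (S (φ k)).exists_lt_apply_of_lt_opNorm (hφ' k)
  set y : ℕ → H := fun k => S (φ k) (x k) with hy
  have hy_mem : ∀ k, y k ∈ closure
      (⋃ n : ℕ, (fun x => T x - Th n x) '' Metric.closedBall (0:H) 1) := by
    intro k
    apply subset_closure
    refine Set.mem_iUnion.2 ⟨φ k, ⟨x k, ?_, ?_⟩⟩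
    · simpa using (hx1 k).le
    · simp [hy, hS]
  obtain ⟨a, _, ψ, hψmono, hψtend⟩ := h_collcomp.tendsto_subseq hy_mem
  have ha_norm : ε / 2 ≤ ‖a‖ :=
    ge_of_tendsto' hψtend.norm (fun k => (hx2 (ψ k)).le)
  have hinner : ∀ z : H, (inner ℝ a z : ℝ) = 0 := by
    intro z
    have h1 : Tendsto (fun k => (inner ℝ (y (ψ k)) z : ℝ)) atTop (nhds (inner ℝ a z)) :=
      hψtend.inner tendsto_const_nhds
    have h2 : Tendsto (fun k => ‖S (φ (ψ k)) z‖) atTop (nhds 0) :=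
      (hS_pt z).comp ((hφmono.comp hψmono).tendsto_atTop)
    have h3 : Tendsto (fun k => (inner ℝ (y (ψ k)) z : ℝ)) atTop (nhds 0) := by
      apply squeeze_zero_norm _ h2
      intro k
      calc ‖(inner ℝ (y (ψ k)) z : ℝ)‖ = ‖(inner ℝ (x (ψ k)) (S (φ (ψ k)) z) : ℝ)‖ := by
            rw [hy, hS_sa]
        _ ≤ ‖x (ψ k)‖ * ‖S (φ (ψ k)) z‖ := norm_inner_le_norm _ _
        _ ≤ 1 * ‖S (φ (ψ k)) z‖ := by
            exact mul_le_mul_of_nonneg_right (hx1 (ψ k)).le (norm_nonneg _)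
        _ = ‖S (φ (ψ k)) z‖ := one_mul _
    exact tendsto_nhds_unique h1 h3
  have ha0 : a = 0 := by
    have := hinner a
    rwa [real_inner_self_eq_norm_sq, pow_eq_zero_iff (by norm_num), norm_eq_zero] at this
  rw [ha0, norm_zero] at ha_norm
  linarith
end

section
/- Let T be a self-adjoint operator on a Hilbert space with simple eigenvalue ν of unit eigenvector u, and let ρ = dist(ν, σ(T)\{ν}) > 0. If ν₀ is not an eigenvalue of T, |ν₀ − ν| ≤ ρ/4, and u₀ is a unit vector with ‖u₀ − u‖ ≤ 1/2, then the solution uˢ of (ν₀ − T)uˢ = u₀, normalized to u' = uˢ/‖uˢ‖, satisfies dist(u', span{u}) ≤ (4/ρ)|ν₀ − ν| ‖u₀ − proj_{span u} u₀‖. -/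
open Filter Topology
set_option linter.unusedSectionVars false
set_option maxHeartbeats 2000000

section aux
variable {H : Type*} [NormedAddCommGroup H] [InnerProductSpace ℝ H] [CompleteSpace H]


/-- an eigenvalue of a continuous linear map belongs to its spectrum. -/

lemma eig_mem_spectrum (T : H →L[ℝ] H) (μ : ℝ) (z : H) (hz : z ≠ 0) (h : T z = μ • z) :
    μ ∈ spectrum ℝ T := by
  rw [spectrum.mem_iff]
  intro hunit
  obtain ⟨U, hU⟩ := hunit
  have h1 : (algebraMap ℝ (H →L[ℝ] H) μ - T) z = 0 := by
    simp [Algebra.algebraMap_eq_smul_one, h, ContinuousLinearMap.smul_apply]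
  have h2 : ((↑U⁻¹ : H →L[ℝ] H) * (↑U : H →L[ℝ] H)) z = z := by
    rw [U.inv_mul]; rfl
  rw [ContinuousLinearMap.mul_apply, hU, h1, map_zero] at h2
  exact hz h2.symm

/-- extraction of a convergent subsequence of images by a compact operator. -/
lemma compact_subseq (D : H →L[ℝ] H) (hD : IsCompactOperator (D : H → H))
    (v : ℕ → H) (hv : ∀ n, ‖v n‖ = 1) :
    ∃ φ : ℕ → ℕ, StrictMono φ ∧ ∃ y, Tendsto (fun n => D (v (φ n))) atTop (𝓝 y) := by
  obtain ⟨C, hC, hmem⟩ := hD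
  obtain ⟨ε, hε, hball⟩ := Metric.mem_nhds_iff.1 hmem
  have hmemC : ∀ n, D ((ε / 2) • v n) ∈ C := by
    intro n
    apply hball
    rw [Metric.mem_ball, dist_zero_right, norm_smul, hv n]
    simp [abs_of_pos hε]
    nlinarith
  obtain ⟨a, _, φ, hφ, hconv⟩ := hC.tendsto_subseq (x := fun n => D ((ε / 2) • v n)) hmemC
  refine ⟨φ, hφ, (2 / ε) • a, ?_⟩
  have : ∀ n, D (v (φ n)) = (2 / ε) • D ((ε / 2) • v (φ n)) := by
    intro n
    rw [map_smul, smul_smul]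
    rw [div_mul_div_comm]
    rw [show (2:ℝ) * ε / (ε * 2) = 1 by rw [mul_comm]; field_simp]
    rw [one_smul]
  simp_rw [this]
  exact hconv.const_smul _


lemma sup_spectral (K : Submodule ℝ H) (hK : IsClosed (K : Set H))
    (D : H →L[ℝ] H) (t : ℝ) (hD : IsCompactOperator (D : H → H))
    (C : H →L[ℝ] H) (hC : ∀ x, C x = t • x + D x)
    (hsym : ∀ x y : H, (inner ℝ (C x) y : ℝ) = inner ℝ x (C y))
    (hCK : ∀ x ∈ K, C x ∈ K)
    (v₀ : H) (hv₀K : v₀ ∈ K) (hv₀n : ‖v₀‖ = 1) :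
    ∃ M : ℝ,
      (inner ℝ (C v₀) v₀ : ℝ) ≤ M ∧
      (∀ b : ℝ, (∀ v ∈ K, ‖v‖ = 1 → (inner ℝ (C v) v : ℝ) ≤ b) → M ≤ b) ∧
      (M ≠ t → ∃ e, e ∈ K ∧ ‖e‖ = 1 ∧ C e = M • e) ∧
      (M = t → ∃ w : ℕ → H, (∀ n, w n ∈ K ∧ ‖w n‖ = 1) ∧
        Tendsto (fun n => D (w n)) atTop (𝓝 0)) := by
  classical
  set s : Set ℝ := (fun v => (inner ℝ (C v) v : ℝ)) '' {v : H | v ∈ K ∧ ‖v‖ = 1} with hs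
  have hsne : s.Nonempty := ⟨_, ⟨v₀, ⟨hv₀K, hv₀n⟩, rfl⟩⟩
  have hbdd : BddAbove s := by
    refine ⟨‖C‖, ?_⟩
    rintro y ⟨v, ⟨hvK, hvn⟩, rfl⟩
    calc (inner ℝ (C v) v : ℝ) ≤ ‖C v‖ * ‖v‖ := real_inner_le_norm _ _
    _ ≤ ‖C‖ * ‖v‖ * ‖v‖ := by
        have := C.le_opNorm v
        nlinarith [norm_nonneg (C v), norm_nonneg v]
    _ = ‖C‖ := by rw [hvn]; ring
  set M : ℝ := sSup s with hM
  have hub : ∀ v ∈ K, ‖v‖ = 1 → (inner ℝ (C v) v : ℝ) ≤ M :=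
    fun v hvK hvn => le_csSup hbdd ⟨v, ⟨hvK, hvn⟩, rfl⟩
  have hlub : ∀ b : ℝ, (∀ v ∈ K, ‖v‖ = 1 → (inner ℝ (C v) v : ℝ) ≤ b) → M ≤ b := by
    intro b hb
    apply csSup_le hsne
    rintro y ⟨v, ⟨hvK, hvn⟩, rfl⟩
    exact hb v hvK hvn
  -- the quadratic form B
  set B : H → H → ℝ := fun x y => M * (inner ℝ x y : ℝ) - (inner ℝ (C x) y : ℝ) with hB
  have hBsymm : ∀ x y, B x y = B y x := by
    intro x y
    simp only [hB]
    rw [hsym x y, real_inner_comm x (C y), real_inner_comm x y]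
  have hBpos : ∀ x ∈ K, 0 ≤ B x x := by
    intro x hxK
    rcases eq_or_ne x 0 with rfl | hx0
    · simp [hB]
    · have hn : ‖x‖ ≠ 0 := norm_ne_zero_iff.2 hx0
      have hxhat : (‖x‖⁻¹ • x) ∈ K := K.smul_mem _ hxK
      have hxn : ‖(‖x‖⁻¹ • x)‖ = 1 := by
        rw [norm_smul, norm_inv, norm_norm, inv_mul_cancel₀ hn]
      have := hub _ hxhat hxn
      have hexp : (inner ℝ (C (‖x‖⁻¹ • x)) (‖x‖⁻¹ • x) : ℝ)
          = ‖x‖⁻¹ * ‖x‖⁻¹ * (inner ℝ (C x) x : ℝ) := by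
        rw [map_smul, real_inner_smul_left, real_inner_smul_right]; ring
      rw [hexp] at this
      have h2 : (inner ℝ (C x) x : ℝ) ≤ M * (‖x‖ * ‖x‖) := by
        have hpos : (0:ℝ) < ‖x‖ := lt_of_le_of_ne (norm_nonneg x) (Ne.symm hn)
        have h3 := mul_le_mul_of_nonneg_left this (by positivity : (0:ℝ) ≤ ‖x‖ * ‖x‖)
        calc (inner ℝ (C x) x : ℝ) = ‖x‖ * ‖x‖ * (‖x‖⁻¹ * ‖x‖⁻¹ * (inner ℝ (C x) x : ℝ)) := by
              field_simp
          _ ≤ ‖x‖ * ‖x‖ * M := h3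
          _ = M * (‖x‖ * ‖x‖) := by ring
      have : (inner ℝ x x : ℝ) = ‖x‖ * ‖x‖ := real_inner_self_eq_norm_mul_norm x
      simp only [hB]
      rw [this]
      linarith
  -- Cauchy–Schwarz for B on K
  have hCS : ∀ x ∈ K, ∀ y ∈ K, (B x y) ^ 2 ≤ B x x * B y y := by
    intro x hx y hy
    have hq : ∀ τ : ℝ, 0 ≤ B y y * (τ * τ) + (2 * B x y) * τ + B x x := by
      intro τ
      have hmem : x + τ • y ∈ K := K.add_mem hx (K.smul_mem _ hy)
      have := hBpos _ hmem
      have hexp : B (x + τ • y) (x + τ • y)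
          = B y y * (τ * τ) + (2 * B x y) * τ + B x x := by
        simp only [hB, map_add, map_smul, inner_add_left, inner_add_right,
          real_inner_smul_left, real_inner_smul_right, smul_eq_mul,
          ContinuousLinearMap.add_apply]
        have h1 : (inner ℝ (C y) x : ℝ) = inner ℝ (C x) y := by
          rw [hsym y x, real_inner_comm]
        have h2 : (inner ℝ y x : ℝ) = inner ℝ x y := real_inner_comm _ _
        rw [h1, h2]; ring
      linarith [hexp ▸ this]
    have hd := discrim_le_zero hq
    simp only [discrim] at hd
    nlinarith [hd]
  -- P := M•1 - C pointwise
  set P : H →L[ℝ] H := M • (1 : H →L[ℝ] H) - C with hP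
  have hPapp : ∀ x, P x = M • x - C x := by intro x; simp [hP]
  have hBP : ∀ x y, B x y = (inner ℝ (P x) y : ℝ) := by
    intro x y
    simp [hPapp, inner_sub_left, real_inner_smul_left, hB]
  have hPK : ∀ x ∈ K, P x ∈ K := by
    intro x hx
    rw [hPapp]
    exact K.sub_mem (K.smul_mem _ hx) (hCK x hx)
  have hPbound : ∀ x ∈ K, ‖P x‖ ^ 2 ≤ ‖P‖ * B x x := by
    intro x hx
    rcases eq_or_ne (P x) 0 with h0 | h0
    · rw [h0, norm_zero]
      have := hBpos x hx
      nlinarith [norm_nonneg P]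
    · have h1 : B x (P x) = ‖P x‖ ^ 2 := by
        rw [hBP, real_inner_self_eq_norm_sq]
      have h2 : B (P x) (P x) ≤ ‖P‖ * ‖P x‖ ^ 2 := by
        rw [hBP]
        calc (inner ℝ (P (P x)) (P x) : ℝ) ≤ ‖P (P x)‖ * ‖P x‖ := real_inner_le_norm _ _
          _ ≤ (‖P‖ * ‖P x‖) * ‖P x‖ := by
              have := P.le_opNorm (P x)
              nlinarith [norm_nonneg (P x)]
          _ = ‖P‖ * ‖P x‖ ^ 2 := by ring
      have h3 := hCS x hx (P x) (hPK x hx)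
      rw [h1] at h3
      have hnz : (0:ℝ) < ‖P x‖ ^ 2 := pow_pos (norm_pos_iff.2 h0) 2
      nlinarith [hBpos x hx, norm_nonneg P]
  -- maximizing sequence
  obtain ⟨y, -, hy, hymem⟩ := exists_seq_tendsto_sSup hsne hbdd
  choose w hw hwval using fun n => hymem n
  have hwK : ∀ n, w n ∈ K := fun n => (hw n).1
  have hwn : ∀ n, ‖w n‖ = 1 := fun n => (hw n).2
  have hBw : Tendsto (fun n => B (w n) (w n)) atTop (𝓝 0) := by
    have : ∀ n, B (w n) (w n) = M - y n := by
      intro n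
      simp only [hB]
      have hyv : (inner ℝ (C (w n)) (w n) : ℝ) = y n := hwval n
      rw [hyv]
      have : (inner ℝ (w n) (w n) : ℝ) = 1 := by
        rw [real_inner_self_eq_norm_mul_norm, hwn n]; ring
      rw [this]; ring
    simp_rw [this]
    have := hy.const_sub M
    simpa [← hM] using this
  have hPw : Tendsto (fun n => P (w n)) atTop (𝓝 0) := by
    rw [tendsto_zero_iff_norm_tendsto_zero]
    have hsq : Tendsto (fun n => ‖P (w n)‖ ^ 2) atTop (𝓝 0) := by
      apply squeeze_zero (fun n => by positivity)
        (fun n => hPbound (w n) (hwK n))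
      simpa using hBw.const_mul ‖P‖
    have := hsq.sqrt
    rw [Real.sqrt_zero] at this
    convert this using 2 with n
    rw [Real.sqrt_sq (norm_nonneg _)]
  refine ⟨M, hub v₀ hv₀K hv₀n, hlub, ?_, ?_⟩
  · -- M ≠ t : eigenvector
    intro hMt
    have hDconv : Tendsto (fun n => D (w n) - (M - t) • w n) atTop (𝓝 0) := by
      have : ∀ n, D (w n) - (M - t) • w n = -(P (w n)) := by
        intro n
        rw [hPapp, hC]
        module
      simp_rw [this]
      simpa using hPw.neg
    obtain ⟨φ, hφ, z, hz⟩ := compact_subseq D hD w hwn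
    have hμ : M - t ≠ 0 := sub_ne_zero.2 hMt
    have hwconv : Tendsto (fun n => w (φ n)) atTop (𝓝 ((M - t)⁻¹ • z)) := by
      have h1 : Tendsto (fun n => (M - t) • w (φ n)) atTop (𝓝 z) := by
        have h2 : Tendsto (fun n => D (w (φ n)) - (M - t) • w (φ n)) atTop (𝓝 0) :=
          hDconv.comp (hφ.tendsto_atTop)
        have := hz.sub h2
        simpa using this
      have := h1.const_smul ((M - t)⁻¹)
      simpa [smul_smul, inv_mul_cancel₀ hμ] using this
    set e := (M - t)⁻¹ • z with he
    have heK : e ∈ K := by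
      have : IsSeqClosed (K : Set H) := hK.isSeqClosed
      exact this (fun n => hwK (φ n)) hwconv
    have hen : ‖e‖ = 1 := by
      have := (continuous_norm.tendsto _).comp hwconv
      have h1 : Tendsto (fun n => ‖w (φ n)‖) atTop (𝓝 ‖e‖) := this
      have h2 : Tendsto (fun n => ‖w (φ n)‖) atTop (𝓝 1) := by
        simp_rw [hwn]; exact tendsto_const_nhds
      exact tendsto_nhds_unique h1 h2
    refine ⟨e, heK, hen, ?_⟩
    have h1 : Tendsto (fun n => P (w (φ n))) atTop (𝓝 (P e)) :=
      (P.continuous.tendsto _).comp hwconv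
    have h2 : Tendsto (fun n => P (w (φ n))) atTop (𝓝 0) := hPw.comp hφ.tendsto_atTop
    have h3 : P e = 0 := tendsto_nhds_unique h1 h2
    rw [hPapp] at h3
    exact (sub_eq_zero.1 h3).symm
  · intro hMt
    refine ⟨w, fun n => ⟨hwK n, hwn n⟩, ?_⟩
    have : ∀ n, D (w n) = -(P (w n)) := by
      intro n
      rw [hPapp, hC, hMt]
      module
    simp_rw [this]
    simpa using hPw.neg

end aux
section key
variable {H : Type*} [NormedAddCommGroup H] [InnerProductSpace ℝ H] [CompleteSpace H]

lemma key_bound (T : H →L[ℝ] H)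
    (hT_sa : ∀ x y : H, (inner ℝ (T x) y : ℝ) = inner ℝ x (T y))
    (hT_compact : IsCompactOperator (T : H → H))
    (ν : ℝ) (u : H) (hu_norm : ‖u‖ = 1) (heig : T u = ν • u)
    (h_simple : ∀ x : H, T x = ν • x → ∃ c : ℝ, x = c • u)
    (ρ : ℝ) (hρ_pos : 0 < ρ)
    (hρ : ρ = Metric.infDist ν (spectrum ℝ T \ {ν}))
    (ν₀ : ℝ) (hshift : |ν₀ - ν| ≤ ρ / 4) :
    ∀ v ∈ (Submodule.span ℝ {u})ᗮ, 3 * ρ / 4 * ‖v‖ ≤ ‖ν₀ • v - T v‖ := by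
  classical
  set K : Submodule ℝ H := (Submodule.span ℝ {u})ᗮ with hKdef
  have hKc : IsClosed (K : Set H) := (Submodule.span ℝ {u}).isClosed_orthogonal
  have hmemK : ∀ z : H, z ∈ K ↔ (inner ℝ u z : ℝ) = 0 := by
    intro z; exact Submodule.mem_orthogonal_singleton_iff_inner_right
  have huu : (inner ℝ u u : ℝ) = 1 := by
    rw [real_inner_self_eq_norm_sq, hu_norm]; norm_num
  -- the compression S'
  set P₁ : H →L[ℝ] H := (innerSL ℝ u).smulRight u with hP₁def
  set S' : H →L[ℝ] H := T - ν • P₁ with hS'def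
  have hS'app : ∀ x, S' x = T x - ν • ((inner ℝ u x : ℝ) • u) := by
    intro x
    simp [hS'def, hP₁def, ContinuousLinearMap.smulRight_apply, innerSL_apply_apply]
  have hS'u : S' u = 0 := by
    rw [hS'app, heig, huu]; simp
  have hS'K : ∀ x, S' x ∈ K := by
    intro x
    rw [hmemK]
    rw [hS'app, inner_sub_right, real_inner_smul_right, real_inner_smul_right, huu]
    have : (inner ℝ u (T x) : ℝ) = inner ℝ (T u) x := (hT_sa u x).symm
    rw [this, heig, real_inner_smul_left]
    ring
  have hS'T : ∀ z ∈ K, S' z = T z := by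
    intro z hz
    rw [hS'app, (hmemK z).1 hz]
    simp
  have hS'sym : ∀ x y : H, (inner ℝ (S' x) y : ℝ) = inner ℝ x (S' y) := by
    intro x y
    rw [hS'app, hS'app, inner_sub_left, inner_sub_right, hT_sa x y,
      real_inner_smul_left, real_inner_smul_right, real_inner_smul_left,
      real_inner_smul_right, real_inner_comm u x]
    ring
  have hS'cpt : IsCompactOperator (S' : H → H) := by
    have hg : IsCompactOperator (fun c : ℝ => c • u) := by
      refine ⟨(fun c : ℝ => c • u) '' Metric.closedBall 0 1, ?_, ?_⟩
      · exact (isCompact_closedBall 0 1).image (by fun_prop)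
      · exact Filter.mem_of_superset (Metric.closedBall_mem_nhds 0 one_pos)
          (fun c hc => ⟨c, hc, rfl⟩)
    have hP₁cpt : IsCompactOperator (P₁ : H → H) := by
      have h := hg.comp_clm (innerSL ℝ u)
      have : ((fun c : ℝ => c • u) ∘ (innerSL ℝ u)) = (P₁ : H → H) := by
        funext x
        simp [hP₁def]
      rwa [this] at h
    have h2 : IsCompactOperator ((T : H → H) - (fun x => ν • P₁ x)) :=
      hT_compact.sub (hP₁cpt.smul ν)
    have : ((T : H → H) - fun x => ν • P₁ x) = (S' : H → H) := by
      funext x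
      simp [hS'def]
    rwa [this] at h2
  -- eigenvalue separation
  have hgap : ∀ μ : ℝ, μ ∈ spectrum ℝ T → μ ≠ ν → ρ ≤ |μ - ν| := by
    intro μ hμσ hμν
    have hmem : μ ∈ spectrum ℝ T \ {ν} := ⟨hμσ, hμν⟩
    have := Metric.infDist_le_dist_of_mem (x := ν) hmem
    rw [← hρ] at this
    rwa [Real.dist_eq, abs_sub_comm] at this
  have hNEV : ∀ (μ : ℝ) (z : H), z ∈ K → z ≠ 0 → S' z = μ • z → ρ ≤ |μ - ν| := by
    intro μ z hzK hz0 hzeig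
    have hTz : T z = μ • z := by rw [← hS'T z hzK, hzeig]
    have hμν : μ ≠ ν := by
      intro h
      rw [h] at hTz
      obtain ⟨c, hc⟩ := h_simple z hTz
      have : (inner ℝ u z : ℝ) = c := by rw [hc, real_inner_smul_right, huu]; ring
      rw [(hmemK z).1 hzK] at this
      rw [hc, ← this, zero_smul] at hz0
      exact hz0 rfl
    exact hgap μ (eig_mem_spectrum T μ z hz0 hTz) hμν
  have hNEV' : ∀ (μ : ℝ) (z : H), z ∈ K → z ≠ 0 → S' z = μ • z → 3 * ρ / 4 ≤ |μ - ν₀| := by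
    intro μ z hzK hz0 hzeig
    have h1 := hNEV μ z hzK hz0 hzeig
    have h2 : |μ - ν| ≤ |μ - ν₀| + |ν₀ - ν| := abs_sub_le _ _ _
    linarith
  -- main argument
  intro v hvK
  by_contra hcon
  push_neg at hcon
  have hv0 : v ≠ 0 := by
    intro h
    rw [h] at hcon
    simp at hcon
  have hvnpos : (0:ℝ) < ‖v‖ := norm_pos_iff.2 hv0
  set c : ℝ := 3 * ρ / 4 with hcdef
  have hcpos : 0 < c := by rw [hcdef]; linarith
  set vh : H := ‖v‖⁻¹ • v with hvhdef
  have hvhK : vh ∈ K := K.smul_mem _ hvK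
  have hvhn : ‖vh‖ = 1 := by
    rw [hvhdef, norm_smul, norm_inv, norm_norm, inv_mul_cancel₀ (ne_of_gt hvnpos)]
  have hvh : ‖ν₀ • vh - S' vh‖ < c := by
    have h1 : ν₀ • vh - S' vh = ‖v‖⁻¹ • (ν₀ • v - T v) := by
      rw [hvhdef, hS'T _ (K.smul_mem _ hvK)]
      rw [map_smul]
      rw [smul_sub, smul_comm]
    rw [h1, norm_smul, norm_inv, norm_norm]
    calc ‖v‖⁻¹ * ‖ν₀ • v - T v‖ < ‖v‖⁻¹ * (c * ‖v‖) := by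
          apply mul_lt_mul_of_pos_left hcon (by positivity)
      _ = c := by field_simp
  -- the operator C₁ = c² - (ν₀ - S')²
  set D₁ : H →L[ℝ] H := (2 * ν₀) • S' - S'.comp S' with hD₁def
  set C₁ : H →L[ℝ] H := (c ^ 2 - ν₀ ^ 2) • (1 : H →L[ℝ] H) + D₁ with hC₁def
  have hD₁app : ∀ x, D₁ x = (2 * ν₀) • S' x - S' (S' x) := by
    intro x; simp [hD₁def]
  have hC₁app : ∀ x, C₁ x = (c ^ 2 - ν₀ ^ 2) • x + D₁ x := by
    intro x; simp [hC₁def]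
  have hD₁cpt : IsCompactOperator (D₁ : H → H) := by
    have h1 : IsCompactOperator ((S' : H → H) ∘ (S' : H → H)) := hS'cpt.comp_clm S'
    have h2 : IsCompactOperator (fun x => (2 * ν₀) • S' x) := hS'cpt.smul (2 * ν₀)
    have h3 := h2.sub h1
    have : ((fun x => (2 * ν₀) • S' x) - ((S' : H → H) ∘ (S' : H → H))) = (D₁ : H → H) := by
      funext x
      simp [hD₁app]
    rwa [this] at h3
  have hC₁sym : ∀ x y : H, (inner ℝ (C₁ x) y : ℝ) = inner ℝ x (C₁ y) := by
    intro x y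
    rw [hC₁app, hC₁app, hD₁app, hD₁app]
    rw [inner_add_left, inner_add_right, inner_sub_left, inner_sub_right,
      real_inner_smul_left, real_inner_smul_right, real_inner_smul_left,
      real_inner_smul_right, hS'sym x y, hS'sym (S' x) y, hS'sym x (S' y)]
  have hC₁K : ∀ x ∈ K, C₁ x ∈ K := by
    intro x hx
    rw [hC₁app, hD₁app]
    exact K.add_mem (K.smul_mem _ hx) (K.sub_mem (K.smul_mem _ (hS'K x)) (hS'K _))
  have hinnerC₁ : ∀ z : H, ‖z‖ = 1 → (inner ℝ (C₁ z) z : ℝ) = c ^ 2 - ‖ν₀ • z - S' z‖ ^ 2 := by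
    intro z hz
    rw [hC₁app, hD₁app]
    rw [inner_add_left, inner_sub_left, real_inner_smul_left, real_inner_smul_left]
    have h1 : (inner ℝ z z : ℝ) = 1 := by rw [real_inner_self_eq_norm_sq, hz]; norm_num
    have h2 : (inner ℝ (S' (S' z)) z : ℝ) = ‖S' z‖ ^ 2 := by
      rw [hS'sym (S' z) z, ← real_inner_self_eq_norm_sq]
    have h3 : ‖ν₀ • z - S' z‖ ^ 2 = ν₀ ^ 2 - 2 * ν₀ * (inner ℝ (S' z) z : ℝ) + ‖S' z‖ ^ 2 := by
      rw [norm_sub_sq_real, real_inner_smul_left, norm_smul, hz, real_inner_comm z (S' z)]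
      simp only [Real.norm_eq_abs, mul_one, mul_pow, sq_abs]
      ring
    rw [h1, h2, h3]
    ring
  obtain ⟨M₁, hM₁ge, hM₁lub, hM₁eig, hM₁deg⟩ :=
    sup_spectral K hKc D₁ (c ^ 2 - ν₀ ^ 2) hD₁cpt C₁ hC₁app hC₁sym hC₁K vh hvhK hvhn
  have hM₁pos : 0 < M₁ := by
    have := hM₁ge
    rw [hinnerC₁ vh hvhn] at this
    nlinarith [norm_nonneg (ν₀ • vh - S' vh)]
  have hM₁c : M₁ ≤ c ^ 2 := by
    apply hM₁lub
    intro w hwK hwn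
    rw [hinnerC₁ w hwn]
    nlinarith [norm_nonneg (ν₀ • w - S' w)]
  rcases eq_or_ne M₁ (c ^ 2 - ν₀ ^ 2) with hMt | hMt
  · -- degenerate case
    obtain ⟨w, hw, hDw⟩ := hM₁deg hMt
    have hν₀c : ν₀ ^ 2 < c ^ 2 := by nlinarith
    have hν₀c' : |ν₀| < c := by
      rw [← Real.sqrt_sq_eq_abs]
      rw [show c = Real.sqrt (c ^ 2) from (Real.sqrt_sq hcpos.le).symm]
      exact Real.sqrt_lt_sqrt (sq_nonneg _) hν₀c
    obtain ⟨φ, hφ, y, hy⟩ := compact_subseq S' hS'cpt w (fun n => (hw n).2)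
    have h7 : Filter.Tendsto (fun n => (2 * ν₀) • S' (w (φ n)) - S' (S' (w (φ n))))
        Filter.atTop (nhds 0) := by
      have := hDw.comp hφ.tendsto_atTop
      simpa only [hD₁app, Function.comp_def] using this
    have h8 : (2 * ν₀) • y - S' y = 0 := by
      have ha : Filter.Tendsto (fun n => (2 * ν₀) • S' (w (φ n)) - S' (S' (w (φ n))))
          Filter.atTop (nhds ((2 * ν₀) • y - S' y)) :=
        (hy.const_smul _).sub ((S'.continuous.tendsto y).comp hy)
      exact tendsto_nhds_unique ha h7
    rcases eq_or_ne y 0 with hy0 | hy0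
    · -- y = 0 : approximate kernel in K
      rw [hy0] at hy
      set w' : ℕ → H := fun n => w (φ n) with hw'def
      have hw'K : ∀ n, w' n ∈ K := fun n => (hw (φ n)).1
      have hw'n : ∀ n, ‖w' n‖ = 1 := fun n => (hw (φ n)).2
      have hS'w' : Filter.Tendsto (fun n => S' (w' n)) Filter.atTop (nhds 0) := hy
      rcases eq_or_ne ν 0 with hν | hν
      · -- ν = 0 : the hard subcase
        by_cases hex : ∃ z ∈ K, ‖S' (S' z)‖ < ρ * ‖S' z‖
        · obtain ⟨z, hzK, hzlt⟩ := hex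
          set E : H →L[ℝ] H := S'.comp S' with hEdef
          have hEapp : ∀ x, E x = S' (S' x) := fun x => rfl
          have hEcpt : IsCompactOperator (E : H → H) := hS'cpt.comp_clm S'
          set G : H →L[ℝ] H := (ρ ^ 2) • E - E.comp E with hGdef
          have hGapp : ∀ x, G x = ρ ^ 2 • S' (S' x) - S' (S' (S' (S' x))) := by
            intro x; simp [hGdef, hEdef]
          have hGcpt : IsCompactOperator (G : H → H) := by
            have h1 : IsCompactOperator ((E : H → H) ∘ (E : H → H)) := hEcpt.comp_clm E
            have h2 : IsCompactOperator (fun x => ρ ^ 2 • E x) := hEcpt.smul (ρ ^ 2)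
            have h3 := h2.sub h1
            have heq : ((fun x => ρ ^ 2 • E x) - ((E : H → H) ∘ (E : H → H))) = (G : H → H) := by
              funext x; simp [hGdef]
            rwa [heq] at h3
          have hs2 : ∀ x y : H, (inner ℝ (S' (S' x)) y : ℝ) = inner ℝ x (S' (S' y)) := by
            intro x y
            rw [hS'sym (S' x) y, hS'sym x (S' y)]
          have hs4 : ∀ x y : H,
              (inner ℝ (S' (S' (S' (S' x)))) y : ℝ) = inner ℝ x (S' (S' (S' (S' y)))) := by
            intro x y
            rw [hs2 (S' (S' x)) y, hs2 x (S' (S' y))]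
          have hGsym : ∀ x y : H, (inner ℝ (G x) y : ℝ) = inner ℝ x (G y) := by
            intro x y
            rw [hGapp, hGapp, inner_sub_left, inner_sub_right, real_inner_smul_left,
              real_inner_smul_right, hs2 x y, hs4 x y]
          have hGK : ∀ x ∈ K, G x ∈ K := by
            intro x hx
            rw [hGapp]
            exact K.sub_mem (K.smul_mem _ (hS'K _)) (hS'K _)
          have hinnerG : ∀ x : H, (inner ℝ (G x) x : ℝ)
              = ρ ^ 2 * ‖S' x‖ ^ 2 - ‖S' (S' x)‖ ^ 2 := by
            intro x
            rw [hGapp, inner_sub_left, real_inner_smul_left]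
            have e1 : (inner ℝ (S' (S' x)) x : ℝ) = ‖S' x‖ ^ 2 := by
              rw [hS'sym (S' x) x, real_inner_comm, real_inner_self_eq_norm_sq]
            have e2 : (inner ℝ (S' (S' (S' (S' x)))) x : ℝ) = ‖S' (S' x)‖ ^ 2 := by
              rw [hS'sym (S' (S' (S' x))) x, hS'sym (S' (S' x)) (S' x),
                real_inner_comm, real_inner_self_eq_norm_sq]
            rw [e1, e2]
          have hS'z0 : S' z ≠ 0 := by
            intro h
            rw [h] at hzlt
            simp at hzlt
          have hz0 : z ≠ 0 := by
            intro h; rw [h, map_zero] at hS'z0; exact hS'z0 rfl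
          have hznpos : (0:ℝ) < ‖z‖ := norm_pos_iff.2 hz0
          set zh : H := ‖z‖⁻¹ • z with hzhdef
          have hzhK : zh ∈ K := K.smul_mem _ hzK
          have hzhn : ‖zh‖ = 1 := by
            rw [hzhdef, norm_smul, norm_inv, norm_norm, inv_mul_cancel₀ (ne_of_gt hznpos)]
          obtain ⟨Mg, hMgge, hMglub, hMgeig, _⟩ :=
            sup_spectral K hKc G 0 hGcpt G (by intro x; simp) hGsym hGK zh hzhK hzhn
          have hMgpos : 0 < Mg := by
            have hval : (inner ℝ (G zh) zh : ℝ)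
                = (‖z‖⁻¹ * ‖z‖⁻¹) * (ρ ^ 2 * ‖S' z‖ ^ 2 - ‖S' (S' z)‖ ^ 2) := by
              rw [hinnerG, hzhdef, map_smul, map_smul, norm_smul, norm_smul,
                norm_inv, norm_norm]
              ring
            have hpos : (0:ℝ) < ρ ^ 2 * ‖S' z‖ ^ 2 - ‖S' (S' z)‖ ^ 2 := by
              nlinarith [norm_nonneg (S' (S' z)), norm_pos_iff.2 hS'z0]
            have : (0:ℝ) < (inner ℝ (G zh) zh : ℝ) := by
              rw [hval]; positivity
            linarith [hMgge]
          have hMgub : Mg ≤ ρ ^ 2 * ρ ^ 2 / 4 := by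
            apply hMglub
            intro x hxK hxn
            rw [hinnerG]
            have e1 : ‖S' x‖ ^ 2 ≤ ‖S' (S' x)‖ := by
              have : (inner ℝ (S' (S' x)) x : ℝ) = ‖S' x‖ ^ 2 := by
                rw [hS'sym (S' x) x, real_inner_comm, real_inner_self_eq_norm_sq]
              calc ‖S' x‖ ^ 2 = (inner ℝ (S' (S' x)) x : ℝ) := this.symm
                _ ≤ ‖S' (S' x)‖ * ‖x‖ := real_inner_le_norm _ _
                _ = ‖S' (S' x)‖ := by rw [hxn, mul_one]
            nlinarith [sq_nonneg (ρ ^ 2 - 2 * ‖S' x‖ ^ 2), sq_nonneg (‖S' x‖ ^ 2),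
              norm_nonneg (S' (S' x)), norm_nonneg (S' x)]
          obtain ⟨e, heK, hen, heeig⟩ := hMgeig (ne_of_gt hMgpos)
          have he0 : e ≠ 0 := by
            intro h; rw [h, norm_zero] at hen; norm_num at hen
          have hEeigF : ∀ s : ℝ, 0 < s → s < ρ ^ 2 →
              ∀ x, x ∈ K → x ≠ 0 → S' (S' x) = s • x → False := by
            intro s hs0 hsρ x hxK hx0 hxe
            set σ : ℝ := Real.sqrt s with hσdef
            have hσ2 : σ ^ 2 = s := Real.sq_sqrt hs0.le
            have hσpos : 0 < σ := Real.sqrt_pos.2 hs0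
            have hσρ : σ < ρ := by nlinarith
            rcases eq_or_ne (S' x - σ • x) 0 with hx₃ | hx₃
            · have he1 : S' x = σ • x := sub_eq_zero.1 hx₃
              have := hNEV σ x hxK hx0 he1
              rw [hν, sub_zero, abs_of_pos hσpos] at this
              linarith
            · have he1 : S' (S' x - σ • x) = (-σ) • (S' x - σ • x) := by
                rw [map_sub, map_smul, hxe, ← hσ2]
                module
              have hx₃K : S' x - σ • x ∈ K := K.sub_mem (hS'K x) (K.smul_mem _ hxK)
              have := hNEV (-σ) _ hx₃K hx₃ he1
              rw [hν, sub_zero, abs_neg, abs_of_pos hσpos] at this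
              linarith
          have h5 : S' (S' (S' (S' e))) = ρ ^ 2 • S' (S' e) - Mg • e := by
            have heq : ρ ^ 2 • S' (S' e) - S' (S' (S' (S' e))) = Mg • e := by
              rw [← hGapp]; exact heeig
            rw [← sub_eq_zero, ← heq]
            module
          set d : ℝ := Real.sqrt (ρ ^ 2 * ρ ^ 2 - 4 * Mg) with hddef
          have hd2 : d ^ 2 = ρ ^ 2 * ρ ^ 2 - 4 * Mg := Real.sq_sqrt (by nlinarith)
          have hdnn : 0 ≤ d := Real.sqrt_nonneg _
          have hdlt : d < ρ ^ 2 := by nlinarith [sq_nonneg ρ]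
          have hMgval : Mg = (ρ ^ 2 * ρ ^ 2 - d ^ 2) / 4 := by linarith [hd2]
          rcases eq_or_ne (S' (S' e) - ((ρ ^ 2 - d) / 2) • e) 0 with hx₂ | hx₂
          · have he1 : S' (S' e) = ((ρ ^ 2 - d) / 2) • e := sub_eq_zero.1 hx₂
            exact hEeigF ((ρ ^ 2 - d) / 2) (by linarith)
              (by linarith [hdnn, pow_pos hρ_pos 2]) e heK he0 he1
          · have he1 : S' (S' (S' (S' e) - ((ρ ^ 2 - d) / 2) • e))
                = ((ρ ^ 2 + d) / 2) • (S' (S' e) - ((ρ ^ 2 - d) / 2) • e) := by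
              rw [map_sub, map_sub, map_smul, map_smul, h5, hMgval]
              module
            have hx₂K : S' (S' e) - ((ρ ^ 2 - d) / 2) • e ∈ K :=
              K.sub_mem (hS'K _) (K.smul_mem _ heK)
            exact hEeigF ((ρ ^ 2 + d) / 2) (by linarith [hdnn, pow_pos hρ_pos 2])
              (by linarith [hdlt]) _ hx₂K hx₂ he1
        · push_neg at hex
          have hlow : ∀ x ∈ K, ρ * ‖x‖ ≤ ‖S' x‖ := by
            intro x hxK
            set W : Submodule ℝ H := Submodule.map (S' : H →ₗ[ℝ] H) K with hWdef
            have hWsub : (W : Set H) ⊆ {h : H | ρ * ‖h‖ ≤ ‖S' h‖} := by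
              rintro _ ⟨k, hk, rfl⟩
              exact hex k hk
            have hclosed : IsClosed {h : H | ρ * ‖h‖ ≤ ‖S' h‖} :=
              isClosed_le (by fun_prop) (by fun_prop)
            have hxcl : x ∈ closure (W : Set H) := by
              have hx2 : x ∈ Wᗮᗮ := by
                rw [Submodule.mem_orthogonal]
                intro y hy
                have h9 : ∀ k ∈ K, (inner ℝ (S' k) y : ℝ) = 0 := by
                  intro k hk
                  exact hy _ (Submodule.mem_map_of_mem hk)
                have h10 : ∀ k ∈ K, (inner ℝ k (S' y) : ℝ) = 0 := by
                  intro k hk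
                  rw [← hS'sym]
                  exact h9 k hk
                have hS'y : S' y = 0 := by
                  have := h10 (S' y) (hS'K y)
                  rw [real_inner_comm, real_inner_self_eq_norm_sq] at this
                  have := pow_eq_zero_iff (n := 2) (by norm_num) |>.1 this
                  exact norm_eq_zero.1 this
                set k₀ : H := y - (inner ℝ u y : ℝ) • u with hk₀def
                have hk₀K : k₀ ∈ K := by
                  rw [hmemK, hk₀def, inner_sub_right, real_inner_smul_right, huu]
                  ring
                have hS'k₀ : S' k₀ = 0 := by
                  rw [hk₀def, map_sub, map_smul, hS'y, hS'u]
                  simp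
                have hTk₀ : T k₀ = ν • k₀ := by
                  have := hS'app k₀
                  rw [hS'k₀, (hmemK k₀).1 hk₀K] at this
                  have hT : T k₀ = 0 := by
                    simpa using this.symm
                  rw [hT, hν, zero_smul]
                obtain ⟨c', hc'⟩ := h_simple k₀ hTk₀
                have hc'0 : c' = 0 := by
                  have h1 : (inner ℝ u k₀ : ℝ) = c' := by
                    rw [hc', real_inner_smul_right, huu]; ring
                  rw [(hmemK k₀).1 hk₀K] at h1
                  exact h1.symm
                have hk₀0 : k₀ = 0 := by rw [hc', hc'0, zero_smul]
                have hyval : y = (inner ℝ u y : ℝ) • u := by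
                  have := hk₀def
                  rw [hk₀0] at this  -- 0 = y - c•u
                  have := this.symm
                  rw [sub_eq_zero] at this
                  exact this
                rw [hyval, real_inner_smul_left, (hmemK x).1 hxK, mul_zero]
              rw [Submodule.orthogonal_orthogonal_eq_closure] at hx2
              rw [← Submodule.topologicalClosure_coe]
              exact hx2
            exact closure_minimal hWsub hclosed hxcl
          have hev : ∀ᶠ n in Filter.atTop, ‖S' (w' n)‖ < ρ := by
            have h1 : Filter.Tendsto (fun n => ‖S' (w' n)‖) Filter.atTop (nhds 0) := by
              have := hS'w'.norm
              simpa using this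
            exact h1.eventually_lt_const hρ_pos
          obtain ⟨n, hn⟩ := hev.exists
          have := hlow (w' n) (hw'K n)
          rw [hw'n n, mul_one] at this
          linarith
      · -- ν ≠ 0 : 0 is in the spectrum of T
        have h0σ : (0:ℝ) ∈ spectrum ℝ T := by
          rw [spectrum.mem_iff]
          intro hunit
          obtain ⟨U, hU⟩ := hunit
          have hlim : Filter.Tendsto (fun n => (↑U⁻¹ : H →L[ℝ] H)
              ((algebraMap ℝ (H →L[ℝ] H) 0 - T) (w' n))) Filter.atTop (nhds 0) := by
            have harg : ∀ n, (algebraMap ℝ (H →L[ℝ] H) 0 - T) (w' n) = -(S' (w' n)) := by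
              intro n
              have := hS'T (w' n) (hw'K n)
              simp [Algebra.algebraMap_eq_smul_one, this]
            simp_rw [harg]
            have hneg : Filter.Tendsto (fun n => -(S' (w' n))) Filter.atTop (nhds 0) := by
              simpa using hS'w'.neg
            have hcomp := ((↑U⁻¹ : H →L[ℝ] H).continuous.tendsto 0).comp hneg
            simpa [Function.comp_def, map_neg] using hcomp
          have hid : ∀ n, (↑U⁻¹ : H →L[ℝ] H) ((algebraMap ℝ (H →L[ℝ] H) 0 - T) (w' n))
              = w' n := by
            intro n
            rw [← hU, ← ContinuousLinearMap.mul_apply, U.inv_mul]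
            rfl
          simp_rw [hid] at hlim
          have := ((continuous_norm.tendsto _).comp hlim)
          have h1 : Filter.Tendsto (fun n => ‖w' n‖) Filter.atTop (nhds 0) := by simpa [Function.comp_def] using this
          have h2 : Filter.Tendsto (fun n => ‖w' n‖) Filter.atTop (nhds 1) := by
            simp_rw [hw'n]; exact tendsto_const_nhds
          have := tendsto_nhds_unique h1 h2
          norm_num at this
        have := hgap 0 h0σ (Ne.symm hν)
        have habs : |ν| < ρ := by
          have h1 : |ν| ≤ |ν - ν₀| + |ν₀| := by
            have := abs_add_le (ν - ν₀) ν₀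
            simpa using this
          rw [abs_sub_comm] at hshift
          have : c = 3 * ρ / 4 := hcdef
          linarith [hν₀c']
        rw [zero_sub, abs_neg] at this
        linarith
    · -- y ≠ 0 : eigenvalue 2ν₀
      have hyK : y ∈ K := by
        have : IsSeqClosed (K : Set H) := hKc.isSeqClosed
        exact this (fun n => hS'K (w (φ n))) hy
      have heigy : S' y = (2 * ν₀) • y := by
        have := sub_eq_zero.1 h8
        exact this.symm
      have := hNEV' (2 * ν₀) y hyK hy0 heigy
      have habs : |2 * ν₀ - ν₀| = |ν₀| := by congr 1; ring
      have hν₀c : ν₀ ^ 2 < c ^ 2 := by nlinarith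
      have : (3:ℝ) * ρ / 4 ≤ |ν₀| := by rw [← habs]; exact this
      nlinarith [abs_nonneg ν₀, sq_abs ν₀]
  · -- nondegenerate: genuine eigenvector
    obtain ⟨e, heK, hen, heeig⟩ := hM₁eig hMt
    have he0 : e ≠ 0 := by
      intro h; rw [h, norm_zero] at hen; norm_num at hen
    have h5 : S' (S' e) = ((c ^ 2 - ν₀ ^ 2) - M₁) • e + (2 * ν₀) • S' e := by
      have heq : (c ^ 2 - ν₀ ^ 2) • e + ((2 * ν₀) • S' e - S' (S' e)) = M₁ • e := by
        rw [← hD₁app, ← hC₁app]; exact heeig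
      have := heq.symm
      rw [← sub_eq_zero] at this
      rw [← sub_eq_zero]
      rw [← this]
      module
    set r : ℝ := Real.sqrt (c ^ 2 - M₁) with hrdef
    have hr2 : r ^ 2 = c ^ 2 - M₁ := Real.sq_sqrt (by linarith)
    have hrnn : 0 ≤ r := Real.sqrt_nonneg _
    have hrc : r < c := by nlinarith
    set x₁ : H := ν₀ • e - S' e - r • e with hx₁def
    rcases eq_or_ne x₁ 0 with hx₁ | hx₁
    · have heig1 : S' e = (ν₀ - r) • e := by
        have hneg : S' e - (ν₀ - r) • e = -x₁ := by rw [hx₁def]; module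
        rw [← sub_eq_zero, hneg, hx₁, neg_zero]
      have := hNEV' (ν₀ - r) e heK he0 heig1
      have habs : |ν₀ - r - ν₀| = r := by
        rw [show ν₀ - r - ν₀ = -r by ring, abs_neg, abs_of_nonneg hrnn]
      rw [habs] at this
      linarith
    · have heig1 : S' x₁ = (ν₀ + r) • x₁ := by
        rw [hx₁def, map_sub, map_sub, map_smul, map_smul, h5]
        match_scalars <;> nlinarith [hr2]
      have hx₁K : x₁ ∈ K := by
        rw [hx₁def]
        exact K.sub_mem (K.sub_mem (K.smul_mem _ heK) (hS'K e)) (K.smul_mem _ heK)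
      have := hNEV' (ν₀ + r) x₁ hx₁K hx₁ heig1
      have habs : |ν₀ + r - ν₀| = r := by
        rw [show ν₀ + r - ν₀ = r by ring, abs_of_nonneg hrnn]
      rw [habs] at this
      linarith

end key



/-- Shifted inverse iteration estimate (Lemma 3.4, simple eigenvalue case):
if `T u = ν u` with `ν` a simple eigenvalue, `ρ = dist(ν, σ(T)∖{ν}) > 0`, `ν₀` is not
an eigenvalue of `T` with `|ν₀ − ν| ≤ ρ/4`, `u₀` is a unit vector with `‖u₀ − u‖ ≤ 1/2`,
and `(ν₀ − T)uˢ = u₀`, `u' = uˢ/‖uˢ‖`, then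
`dist(u', span{u}) ≤ (4/ρ)|ν₀ − ν|·‖u₀ − proj_{span u} u₀‖`. -/
theorem shifted_inverse_iteration_estimate
    {H : Type*} [NormedAddCommGroup H] [InnerProductSpace ℝ H] [CompleteSpace H]
    (T : H →L[ℝ] H)
    (hT_sa : ∀ x y : H, (inner ℝ (T x) y : ℝ) = inner ℝ x (T y))
    (hT_compact : IsCompactOperator T)
    (ν : ℝ) (u : H) (hu_norm : ‖u‖ = 1) (heig : T u = ν • u)
    (h_simple : ∀ x : H, T x = ν • x → ∃ c : ℝ, x = c • u)
    (ρ : ℝ) (hρ_pos : 0 < ρ)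
    (hρ : ρ = Metric.infDist ν (spectrum ℝ T \ {ν}))
    (ν₀ : ℝ) (hν₀_not_eig : ∀ x : H, x ≠ 0 → T x ≠ ν₀ • x)
    (hshift : |ν₀ - ν| ≤ ρ / 4)
    (u₀ : H) (hu₀_norm : ‖u₀‖ = 1) (hu₀_close : ‖u₀ - u‖ ≤ 1 / 2)
    (us : H) (hus : ν₀ • us - T us = u₀) :
    Metric.infDist (‖us‖⁻¹ • us) (Submodule.span ℝ {u} : Submodule ℝ H) ≤
      4 / ρ * |ν₀ - ν| * ‖u₀ - (inner ℝ u u₀ : ℝ) • u‖ := by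
  classical
  have hkey := key_bound T hT_sa hT_compact ν u hu_norm heig h_simple ρ hρ_pos hρ ν₀ hshift
  set α : ℝ := (inner ℝ u u₀ : ℝ) with hα
  set β : ℝ := (inner ℝ u us : ℝ) with hβ
  have huu : (inner ℝ u u : ℝ) = 1 := by
    rw [real_inner_self_eq_norm_sq, hu_norm]; norm_num
  have hαβ : (ν₀ - ν) * β = α := by
    have h1 : (inner ℝ u (ν₀ • us - T us) : ℝ) = inner ℝ u u₀ := by rw [hus]
    rw [inner_sub_right, real_inner_smul_right] at h1
    have h2 : (inner ℝ u (T us) : ℝ) = ν * β := by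
      calc (inner ℝ u (T us) : ℝ) = inner ℝ (T u) us := (hT_sa u us).symm
        _ = ν * β := by rw [heig, real_inner_smul_left]
    rw [h2] at h1
    rw [hα, ← h1]; ring
  have hαge : 1 / 2 ≤ α := by
    have h1 : α = 1 + (inner ℝ u (u₀ - u) : ℝ) := by
      rw [hα, inner_sub_right, huu]; ring
    have h2 : |(inner ℝ u (u₀ - u) : ℝ)| ≤ ‖u‖ * ‖u₀ - u‖ := abs_real_inner_le_norm _ _
    rw [hu_norm, one_mul] at h2
    have h3 := (abs_le.1 h2).1
    linarith
  have hne : ν₀ - ν ≠ 0 := by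
    intro h
    rw [h, zero_mul] at hαβ
    linarith
  have habs : 0 < |ν₀ - ν| := abs_pos.2 hne
  have husn : α / |ν₀ - ν| ≤ ‖us‖ := by
    have h1 : |β| ≤ ‖u‖ * ‖us‖ := abs_real_inner_le_norm u us
    rw [hu_norm, one_mul] at h1
    have h2 : |α| = |ν₀ - ν| * |β| := by rw [← hαβ, abs_mul]
    have hαpos : 0 < α := by linarith
    rw [abs_of_pos hαpos] at h2
    rw [div_le_iff₀ habs]
    calc α = |ν₀ - ν| * |β| := h2
      _ ≤ |ν₀ - ν| * ‖us‖ := mul_le_mul_of_nonneg_left h1 habs.le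
      _ = ‖us‖ * |ν₀ - ν| := mul_comm _ _
  have hαpos : 0 < α := by linarith
  have huspos : 0 < ‖us‖ := lt_of_lt_of_le (by positivity) husn
  set v : H := us - β • u with hv
  have hvK : v ∈ (Submodule.span ℝ {u})ᗮ := by
    rw [Submodule.mem_orthogonal_singleton_iff_inner_right]
    rw [hv, inner_sub_right, real_inner_smul_right, huu, ← hβ]
    ring
  have hveq : ν₀ • v - T v = u₀ - α • u := by
    rw [hv, map_sub, map_smul, heig, smul_sub, ← hus, ← hαβ]
    module
  have hbound := hkey v hvK
  rw [hveq] at hbound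
  have hinv : ‖us‖⁻¹ ≤ 2 * |ν₀ - ν| := by
    have h1 : (2 * |ν₀ - ν|)⁻¹ ≤ α / |ν₀ - ν| := by
      rw [inv_eq_one_div, div_le_div_iff₀ (by positivity) habs]
      nlinarith
    have h2 : (2 * |ν₀ - ν|)⁻¹ ≤ ‖us‖ := le_trans h1 husn
    have h3 := inv_anti₀ (by positivity) h2
    rwa [inv_inv] at h3
  have hmem : ((‖us‖⁻¹ * β) • u) ∈ (Submodule.span ℝ {u} : Submodule ℝ H) :=
    Submodule.smul_mem _ _ (Submodule.mem_span_singleton_self u)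
  have hdist := Metric.infDist_le_dist_of_mem (x := ‖us‖⁻¹ • us) hmem
  have hdeq : dist (‖us‖⁻¹ • us) ((‖us‖⁻¹ * β) • u) = ‖us‖⁻¹ * ‖v‖ := by
    rw [dist_eq_norm, hv, mul_smul, ← smul_sub, norm_smul, norm_inv, norm_norm]
  rw [hdeq] at hdist
  refine le_trans hdist ?_
  have hstep : ‖us‖⁻¹ * ‖v‖ ≤ (2 * |ν₀ - ν|) * ‖v‖ :=
    mul_le_mul_of_nonneg_right hinv (norm_nonneg v)
  refine le_trans hstep ?_
  have h9 : 4 / ρ * |ν₀ - ν| * ‖u₀ - α • u‖ = 4 * |ν₀ - ν| * ‖u₀ - α • u‖ / ρ := by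
    ring
  rw [h9, le_div_iff₀ hρ_pos]
  nlinarith [mul_le_mul_of_nonneg_left hbound habs.le, abs_nonneg (ν₀ - ν),
    norm_nonneg v, norm_nonneg (u₀ - α • u),
    mul_nonneg (mul_nonneg habs.le (norm_nonneg v)) hρ_pos.le]
end

section
/- Under the setting of the previous lemma, if additionally v satisfies ‖v‖_A = 1 and ‖v−u‖_A ≤ √c/(4√(λ+c)), then the Rayleigh quotient R(v) = a(v,v)/m(v,v) satisfies |R(v) − λ| ≤ 4(λ+c)(1 + λ/c)·‖v − u‖_A². -/
set_option maxHeartbeats 1000000 in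
/-- Rayleigh quotient error bound (estimate (3.6)): under the same setting,
if `‖v‖_A = 1` and `‖v − u‖_A ≤ √c/(4√(λ+c))`, then
`|a(v,v)/m(v,v) − λ| ≤ 4(λ+c)(1+λ/c)·‖v−u‖_A²`. -/
theorem rayleigh_quotient_error_bound
    {H : Type*} [NormedAddCommGroup H] [InnerProductSpace ℝ H] [CompleteSpace H]
    (a m : LinearMap.BilinForm ℝ H)
    (ha_symm : a.IsSymm) (ha_pos : ∀ w, 0 ≤ a w w)
    (hm_symm : m.IsSymm) (hm_posdef : ∀ w, w ≠ 0 → 0 < m w w)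
    (c : ℝ) (hc : 0 < c)
    (hA : ∀ w z : H, (inner ℝ w z : ℝ) = a w z + c * m w z)
    (lam : ℝ) (hlam : 0 ≤ lam) (u : H)
    (heig : ∀ w, a u w = lam * m u w) (hu_norm : ‖u‖ = 1)
    (v : H) (hv_norm : ‖v‖ = 1)
    (hclose : ‖v - u‖ ≤ Real.sqrt c / (4 * Real.sqrt (lam + c))) :
    |a v v / m v v - lam| ≤ 4 * (lam + c) * (1 + lam / c) * ‖v - u‖ ^ 2 := by
  have hs : (0:ℝ) < lam + c := by linarith
  set e := v - u with he
  have hv : v = u + e := by rw [he]; abel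
  -- nonnegativity of m on diagonal
  have hm_nonneg : ∀ w, 0 ≤ m w w := by
    intro w
    rcases eq_or_ne w 0 with h | h
    · simp [h]
    · exact (hm_posdef w h).le
  -- inner products
  have hiuu : (inner ℝ u u : ℝ) = 1 := by
    simp [real_inner_self_eq_norm_sq, hu_norm]
  have hmuu : (lam + c) * m u u = 1 := by
    have h1 := hA u u
    rw [heig u, hiuu] at h1
    linarith
  have hmue : (lam + c) * m u e = inner ℝ u e := by
    have h1 := hA u e
    rw [heig e] at h1
    linarith
  have hue_abs : |(inner ℝ u e : ℝ)| ≤ ‖e‖ := by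
    calc |(inner ℝ u e : ℝ)| ≤ ‖u‖ * ‖e‖ := abs_real_inner_le_norm u e
    _ = ‖e‖ := by rw [hu_norm, one_mul]
  have hee : a e e + c * m e e = ‖e‖ ^ 2 := by
    have h1 := hA e e
    rw [real_inner_self_eq_norm_sq] at h1
    linarith
  -- ‖e‖ ≤ 1/4
  have hsqrt : Real.sqrt c ≤ Real.sqrt (lam + c) := Real.sqrt_le_sqrt (by linarith)
  have hsqrtpos : 0 < Real.sqrt (lam + c) := Real.sqrt_pos.mpr hs
  have heps : ‖e‖ ≤ 1/4 := by
    calc ‖e‖ ≤ Real.sqrt c / (4 * Real.sqrt (lam + c)) := hclose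
    _ ≤ Real.sqrt (lam + c) / (4 * Real.sqrt (lam + c)) := by
        apply div_le_div_of_nonneg_right hsqrt (by positivity)
    _ = 1/4 := by field_simp
  -- expansions
  have hmvv : m v v = m u u + 2 * m u e + m e e := by
    rw [hv]
    simp only [map_add, LinearMap.add_apply]
    have := hm_symm.eq e u
    rw [← this]; ring
  have havv : a v v = lam * m u u + 2 * (lam * m u e) + a e e := by
    rw [hv]
    simp only [map_add, LinearMap.add_apply]
    have h1 := ha_symm.eq e u
    rw [h1]; simp only [heig]; ring
  -- bounds on m v v
  have hmue_lb : -(‖e‖) ≤ (lam + c) * m u e := by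
    rw [hmue]; exact (abs_le.mp hue_abs).1
  have hmvv_lb : 1 / (2 * (lam + c)) ≤ m v v := by
    rw [hmvv]
    rw [div_le_iff₀ (by positivity)]
    nlinarith [hm_nonneg e, hmue_lb, hmuu, heps]
  have hv0 : v ≠ 0 := by
    intro h; rw [h, norm_zero] at hv_norm; norm_num at hv_norm
  have hmvv_pos : 0 < m v v := hm_posdef v hv0
  -- numerator
  have hnum : a v v - lam * m v v = a e e - lam * m e e := by
    rw [havv, hmvv]; ring
  have haee : a e e ≤ ‖e‖ ^ 2 := by nlinarith [hm_nonneg e]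
  have hmee : lam * m e e ≤ lam / c * ‖e‖ ^ 2 := by
    have h1 : m e e ≤ ‖e‖ ^ 2 / c := by
      rw [le_div_iff₀ hc]; nlinarith [ha_pos e]
    calc lam * m e e ≤ lam * (‖e‖ ^ 2 / c) := by
          exact mul_le_mul_of_nonneg_left h1 hlam
    _ = lam / c * ‖e‖ ^ 2 := by ring
  have hnum_abs : |a e e - lam * m e e| ≤ (1 + lam / c) * ‖e‖ ^ 2 := by
    rw [abs_le]
    constructor
    · nlinarith [ha_pos e, hm_nonneg e, sq_nonneg ‖e‖]
    · nlinarith [hm_nonneg e, mul_nonneg hlam (hm_nonneg e), sq_nonneg ‖e‖,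
        div_nonneg hlam hc.le]
  -- conclude
  have hkey : a v v / m v v - lam = (a e e - lam * m e e) / m v v := by
    rw [← hnum, sub_div, mul_div_assoc, div_self hmvv_pos.ne', mul_one]
  rw [hkey, abs_div, abs_of_pos hmvv_pos, div_le_iff₀ hmvv_pos]
  have h1 : (1 + lam / c) * ‖e‖ ^ 2 ≤ 4 * (lam + c) * (1 + lam / c) * ‖e‖ ^ 2 * (1 / (2 * (lam + c))) := by
    have : 4 * (lam + c) * (1 + lam / c) * ‖e‖ ^ 2 * (1 / (2 * (lam + c)))
        = 2 * ((1 + lam / c) * ‖e‖ ^ 2) := by field_simp; ring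
    rw [this]
    nlinarith [sq_nonneg ‖e‖, div_nonneg hlam hc.le]
  calc |a e e - lam * m e e| ≤ (1 + lam / c) * ‖e‖ ^ 2 := hnum_abs
  _ ≤ 4 * (lam + c) * (1 + lam / c) * ‖e‖ ^ 2 * (1 / (2 * (lam + c))) := h1
  _ ≤ 4 * (lam + c) * (1 + lam / c) * ‖e‖ ^ 2 * m v v := by
      apply mul_le_mul_of_nonneg_left hmvv_lb
      positivity
end
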